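/- arXiv:1206.5561 — 3 statements merged into one kernel-verified Lean document; each statement's English description precedes it below -/
import Mathlib

section
/- If λ > 4, then for every E ∈ ℝ and every k ≥ -1, at least one of |x_k(E,λ)|, |x_{k+1}(E,λ)|, |x_{k+2}(E,λ)| is strictly greater than 1. More precisely: if three real numbers a, b, c satisfy a² + b² + c² - 2abc = 1 + λ²/4 with λ > 4, then max{|a|,|b|,|c|} > 1. -/
/-- If `a² + b² + c² - 2abc = 1 + λ²/4` with `λ > 4`, then `max{|a|,|b|,|c|} > 1`. -/
theorem fricke_vogt_escape (lam a b c : ℝ) (hlam : lam > 4)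
    (h : a ^ 2 + b ^ 2 + c ^ 2 - 2 * a * b * c = 1 + lam ^ 2 / 4) :
    1 < max |a| (max |b| |c|) := by
  by_contra hc
  push_neg at hc
  have ha := le_trans (le_max_left |a| _) hc
  have hb := le_trans (le_trans (le_max_left |b| |c|) (le_max_right _ _)) hc
  have hcc := le_trans (le_trans (le_max_right |b| |c|) (le_max_right _ _)) hc
  rw [abs_le] at ha hb hcc
  nlinarith [sq_nonneg (a*b - c), sq_nonneg (a*b + c), sq_nonneg (a - b), sq_nonneg (a + b), sq_nonneg lam, mul_nonneg (sub_nonneg.2 ha.2) (sub_nonneg.2 hb.2), mul_nonneg (sub_nonneg.2 ha.2) (sub_nonneg.2 hcc.2)]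
end

section
/- For each x ∈ ℝ with x ≠ 1/2, the point (x, x/(2x-1), x) is fixed by T², where T(x,y,z) = (2xy-z, x, y); i.e., T²(x, x/(2x-1), x) = (x, x/(2x-1), x). -/
/-- For `x ≠ 1/2`, the point `(x, x/(2x-1), x)` is fixed by `T²`,
where `T(x,y,z) = (2xy - z, x, y)`. -/
theorem period_two_curve_fixed
    (T : ℝ × ℝ × ℝ → ℝ × ℝ × ℝ)
    (hT : ∀ x y z : ℝ, T (x, y, z) = (2 * x * y - z, x, y)) :
    ∀ x : ℝ, x ≠ 1 / 2 →
      T (T (x, x / (2 * x - 1), x)) = (x, x / (2 * x - 1), x) := by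
  intro x hx
  have h : (2 * x - 1) ≠ 0 := by
    intro h
    apply hx
    linarith
  rw [hT, hT]
  simp only [Prod.mk.injEq]
  refine ⟨?_, ?_, ?_⟩
  · field_simp
    ring
  · field_simp
    ring
  · trivial
end

section
/- For x near 1 (with x > 1/2), the function λ^u(x) = (1 - 2x + 8x² + √(-3 + 12x + 4x² - 32x³ + 64x⁴)) / (2(2x-1)) satisfies λ^u(1) = (7+3√5)/2, (λ^u)'(1) = 0, and (λ^u)''(1) > 0; in particular, λ^u has a strict local minimum at x = 1. -/
open Real

noncomputable def gP : ℝ → ℝ := fun x => 64 * x ^ 4 - 32 * x ^ 3 + 4 * x ^ 2 + 12 * x - 3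

noncomputable def luF : ℝ → ℝ := fun x =>
  (1 - 2 * x + 8 * x ^ 2 + Real.sqrt (gP x)) / (2 * (2 * x - 1))

noncomputable def F1 : ℝ → ℝ := fun x =>
  ((16 * x - 2 + (256 * x ^ 3 - 96 * x ^ 2 + 8 * x + 12) / (2 * Real.sqrt (gP x))) * (2 * (2 * x - 1))
    - (1 - 2 * x + 8 * x ^ 2 + Real.sqrt (gP x)) * 4) / (2 * (2 * x - 1)) ^ 2

lemma gP_pos {x : ℝ} (hx : 1/2 < x) : 0 < gP x := by
  have h1 : 0 < 8*x^2 - 6*x + 3 := by nlinarith [sq_nonneg (8*x - 3)]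
  have h2 : 0 < 8*x^2 + 2*x - 1 := by nlinarith
  have h3 := mul_pos h1 h2
  unfold gP; nlinarith [h3]

lemma hasDerivAt_gP (x : ℝ) : HasDerivAt gP (256*x^3 - 96*x^2 + 8*x + 12) x := by
  unfold gP
  refine ((((((hasDerivAt_pow 4 x).const_mul (64:ℝ)).sub ((hasDerivAt_pow 3 x).const_mul 32)).add
    ((hasDerivAt_pow 2 x).const_mul 4)).add ((hasDerivAt_id x).const_mul 12)).sub_const 3).congr_deriv ?_
  ring

lemma hasDerivAt_D (x : ℝ) : HasDerivAt (fun y : ℝ => 2 * (2 * y - 1)) 4 x := by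
  refine ((((hasDerivAt_id x).const_mul (2:ℝ)).sub_const 1).const_mul 2).congr_deriv ?_
  norm_num

lemma hasDerivAt_luF {x : ℝ} (hx : 1/2 < x) : HasDerivAt luF (F1 x) x := by
  have hg := hasDerivAt_gP x
  have hgpos := gP_pos hx
  have hu : HasDerivAt (fun y => Real.sqrt (gP y))
      ((256*x^3 - 96*x^2 + 8*x + 12) / (2 * Real.sqrt (gP x))) x := hg.sqrt hgpos.ne'
  have hNum : HasDerivAt (fun y : ℝ => 1 - 2*y + 8*y^2 + Real.sqrt (gP y))
      (16*x - 2 + (256*x^3 - 96*x^2 + 8*x + 12) / (2 * Real.sqrt (gP x))) x := by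
    refine ((((hasDerivAt_const x (1:ℝ)).sub ((hasDerivAt_id x).const_mul 2)).add
      ((hasDerivAt_pow 2 x).const_mul 8)).add hu).congr_deriv ?_
    ring
  have hDne : (2 * (2 * x - 1)) ≠ 0 := by nlinarith
  exact hNum.div (hasDerivAt_D x) hDne

lemma gP_one : gP 1 = 45 := by unfold gP; norm_num

lemma sqrt_gP_one : Real.sqrt (gP 1) = 3 * Real.sqrt 5 := by
  rw [gP_one, show (45:ℝ) = 3^2 * 5 by norm_num, Real.sqrt_mul (by positivity),
    Real.sqrt_sq (by norm_num)]

lemma hasDerivAt_F1 : HasDerivAt F1 (8 + 56 * Real.sqrt 5 / 15) 1 := by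
  have hs2 : Real.sqrt 5 ^ 2 = 5 := Real.sq_sqrt (by norm_num)
  have hspos : 0 < Real.sqrt 5 := Real.sqrt_pos.mpr (by norm_num)
  have hu1 : HasDerivAt (fun y => Real.sqrt (gP y)) (6 * Real.sqrt 5) 1 := by
    have h := (hasDerivAt_gP 1).sqrt (by rw [gP_one]; norm_num)
    convert h using 1
    rw [sqrt_gP_one]
    rw [eq_div_iff (by positivity)]
    nlinarith [hs2]
  have hq1 : HasDerivAt (fun y : ℝ => 256*y^3 - 96*y^2 + 8*y + 12) (584:ℝ) 1 := by
    refine (((((hasDerivAt_pow 3 (1:ℝ)).const_mul (256:ℝ)).sub ((hasDerivAt_pow 2 (1:ℝ)).const_mul 96)).add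
      ((hasDerivAt_id (1:ℝ)).const_mul 8)).add_const 12).congr_deriv ?_
    norm_num
  have hden : HasDerivAt (fun y => 2 * Real.sqrt (gP y)) (12 * Real.sqrt 5) 1 := by
    refine (hu1.const_mul 2).congr_deriv ?_; ring
  have hne : 2 * Real.sqrt (gP 1) ≠ 0 := by rw [sqrt_gP_one]; positivity
  have hfrac : HasDerivAt (fun y : ℝ => (256*y^3 - 96*y^2 + 8*y + 12) / (2 * Real.sqrt (gP y)))
      (112 * Real.sqrt 5 / 15) 1 := by
    have h := hq1.div hden hne
    refine h.congr_deriv ?_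
    simp only [sqrt_gP_one]
    norm_num
    field_simp
    nlinarith [hs2]
  have hN' : HasDerivAt (fun y : ℝ => 16*y - 2 + (256*y^3 - 96*y^2 + 8*y + 12) / (2 * Real.sqrt (gP y)))
      (16 + 112 * Real.sqrt 5 / 15) 1 := by
    refine ((((hasDerivAt_id (1:ℝ)).const_mul (16:ℝ)).sub_const 2).add hfrac).congr_deriv ?_
    ring
  have hNum1 : HasDerivAt (fun y : ℝ => 1 - 2*y + 8*y^2 + Real.sqrt (gP y)) (14 + 6 * Real.sqrt 5) 1 := by
    refine ((((hasDerivAt_const (1:ℝ) (1:ℝ)).sub ((hasDerivAt_id (1:ℝ)).const_mul 2)).add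
      ((hasDerivAt_pow 2 (1:ℝ)).const_mul 8)).add hu1).congr_deriv ?_
    norm_num
  have hQ : HasDerivAt (fun y : ℝ => (2 * (2 * y - 1)) ^ 2) 16 1 := by
    refine ((hasDerivAt_D 1).pow 2).congr_deriv ?_
    norm_num
  have hP := (hN'.mul (hasDerivAt_D 1)).sub (hNum1.mul_const 4)
  have h := hP.div hQ (by norm_num : ((2 * (2 * (1:ℝ) - 1)) ^ 2) ≠ 0)
  unfold F1
  refine h.congr_deriv ?_
  simp only [Pi.sub_apply, Pi.mul_apply, sqrt_gP_one]
  norm_num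
  field_simp
  ring_nf
  nlinarith [hs2]

lemma luF_one : luF 1 = (7 + 3 * Real.sqrt 5) / 2 := by
  unfold luF
  rw [sqrt_gP_one]
  norm_num

lemma F1_one : F1 1 = 0 := by
  have hs2 : Real.sqrt 5 ^ 2 = 5 := Real.sq_sqrt (by norm_num)
  have hspos : 0 < Real.sqrt 5 := Real.sqrt_pos.mpr (by norm_num)
  unfold F1
  rw [sqrt_gP_one]
  norm_num
  field_simp
  nlinarith [hs2]

lemma luF_min {x : ℝ} (hx1 : 3/4 < x) (hne : x ≠ 1) :
    (7 + 3 * Real.sqrt 5) / 2 < luF x := by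
  have hs2 : Real.sqrt 5 ^ 2 = 5 := Real.sq_sqrt (by norm_num)
  have hspos : 0 < Real.sqrt 5 := Real.sqrt_pos.mpr (by norm_num)
  set s := Real.sqrt 5
  set u := Real.sqrt (gP x) with hu
  have hgpos : 0 < gP x := gP_pos (by linarith)
  have hu0 : 0 ≤ u := Real.sqrt_nonneg _
  have hu2 : u ^ 2 = gP x := Real.sq_sqrt hgpos.le
  have hDpos : 0 < 2 * (2 * x - 1) := by linarith
  have hapos : 0 < (7 + 3 * s) / 2 := by positivity
  have ha2 : ((7 + 3*s)/2) ^ 2 - 7 * ((7 + 3*s)/2) + 1 = 0 := by nlinarith [hs2]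
  have h27 : 7 * (2 * (2 * x - 1)) < 2 * (8*x^2 - 2*x + 1) := by
    have hne' : x - 1 ≠ 0 := sub_ne_zero.mpr hne
    have : (x - 1)^2 > 0 := by positivity
    nlinarith [this]
  show (7 + 3 * s) / 2 < (1 - 2 * x + 8 * x ^ 2 + u) / (2 * (2 * x - 1))
  by_contra hc
  push_neg at hc
  rw [div_le_iff₀ hDpos] at hc
  have h1 : u ≤ ((7 + 3*s)/2) * (2 * (2 * x - 1)) - (8*x^2 - 2*x + 1) := by linarith
  have h2 : 0 ≤ ((7 + 3*s)/2) * (2 * (2 * x - 1)) - (8*x^2 - 2*x + 1) := le_trans hu0 h1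
  have h3 : u^2 ≤ (((7 + 3*s)/2) * (2 * (2 * x - 1)) - (8*x^2 - 2*x + 1))^2 := by nlinarith
  have h4 : gP x = (8*x^2 - 2*x + 1)^2 - (2 * (2 * x - 1))^2 := by unfold gP; ring
  rw [hu2, h4] at h3
  nlinarith [h3, ha2, mul_pos hDpos hapos, h27, mul_pos (mul_pos hDpos hapos) (sub_pos.mpr h27)]

/-- The unstable multiplier `λᵘ(x)` along the period-two curve satisfies
`λᵘ(1) = (7+3√5)/2`, `(λᵘ)'(1) = 0`, `(λᵘ)''(1) > 0`, and `λᵘ` has a strict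
local minimum at `x = 1`. -/
theorem unstable_multiplier_local_min
    (lu : ℝ → ℝ)
    (hlu : ∀ x : ℝ, lu x =
      (1 - 2 * x + 8 * x ^ 2 +
        Real.sqrt (64 * x ^ 4 - 32 * x ^ 3 + 4 * x ^ 2 + 12 * x - 3)) /
        (2 * (2 * x - 1))) :
    lu 1 = (7 + 3 * Real.sqrt 5) / 2 ∧
    deriv lu 1 = 0 ∧
    deriv (deriv lu) 1 > 0 ∧
    ∃ δ > 0, ∀ x : ℝ, x ≠ 1 → |x - 1| < δ → lu 1 < lu x := by
  have hfe : lu = luF := funext fun x => (hlu x).trans rfl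
  subst hfe
  refine ⟨luF_one, ?_, ?_, 1/4, by norm_num, ?_⟩
  · rw [(hasDerivAt_luF (by norm_num : (1:ℝ)/2 < 1)).deriv, F1_one]
  · have heq : deriv luF =ᶠ[nhds (1:ℝ)] F1 := by
      filter_upwards [Ioo_mem_nhds (show (1:ℝ)/2 < 1 by norm_num) (show (1:ℝ) < 2 by norm_num)] with x hx
      exact (hasDerivAt_luF hx.1).deriv
    rw [heq.deriv_eq, hasDerivAt_F1.deriv]
    positivity
  · intro x hne hd
    rw [abs_lt] at hd
    rw [luF_one]
    exact luF_min (by linarith [hd.1]) hne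
end
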